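/- With a = C√B for constant C > 0, h = max{w ∈ ℕ : aw + w(w+1)/2 ≤ B}, and p = max{w ∈ ℕ : w(w+1)/2 ≤ B − a}, we have lim_{B→∞} (a + p)/(a + h) = (C + √2)/√(C² + 2), and therefore the supremum of this limit over C > 0 equals √2. -/

import Mathlib

open Filter

noncomputable def rr (c x : ℝ) : ℝ := -(c + 1/2) + Real.sqrt ((c + 1/2)^2 + 2*x)

lemma quad_iff (c x : ℝ) (hc : 0 ≤ c) (hx : 0 ≤ x) (t : ℝ) (ht : 0 ≤ t) :
    c * t + t * (t + 1) / 2 ≤ x ↔ t ≤ rr c x := by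
  have hnn : (0:ℝ) ≤ (c + 1/2)^2 + 2*x := by positivity
  constructor
  · intro h
    have h1 : (t + (c + 1/2))^2 ≤ (c + 1/2)^2 + 2*x := by nlinarith
    have h2 : t + (c + 1/2) ≤ Real.sqrt ((c + 1/2)^2 + 2*x) := by
      calc t + (c + 1/2) = Real.sqrt ((t + (c + 1/2))^2) := (Real.sqrt_sq (by linarith)).symm
        _ ≤ _ := Real.sqrt_le_sqrt h1
    unfold rr; linarith
  · intro h
    have h2 : t + (c + 1/2) ≤ Real.sqrt ((c + 1/2)^2 + 2*x) := by unfold rr at h; linarith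
    have h3 := Real.sq_sqrt hnn
    nlinarith [sq_nonneg (t + (c+1/2)), mul_self_le_mul_self (by linarith : (0:ℝ) ≤ t + (c+1/2)) h2]

lemma sSup_quad (c x : ℝ) (hc : 0 ≤ c) (hx : 0 ≤ x) :
    rr c x - 1 ≤ ((sSup {w : ℕ | c * w + (w:ℝ) * ((w:ℝ) + 1) / 2 ≤ x} : ℕ) : ℝ) ∧
    ((sSup {w : ℕ | c * w + (w:ℝ) * ((w:ℝ) + 1) / 2 ≤ x} : ℕ) : ℝ) ≤ rr c x := by
  set S := {w : ℕ | c * w + (w:ℝ) * ((w:ℝ) + 1) / 2 ≤ x} with hS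
  have hmem : ∀ w : ℕ, w ∈ S ↔ (w:ℝ) ≤ rr c x := fun w =>
    quad_iff c x hc hx w (Nat.cast_nonneg w)
  have h0 : (0:ℕ) ∈ S := by simp [hS]; linarith
  have hbdd : BddAbove S := ⟨⌊rr c x⌋₊, fun w hw => Nat.le_floor ((hmem w).mp hw)⟩
  have hmem' : sSup S ∈ S := Nat.sSup_mem ⟨0, h0⟩ hbdd
  have h2 := (hmem _).mp hmem'
  have h3 : sSup S + 1 ∉ S := fun h => Nat.not_succ_le_self _ (le_csSup hbdd h)
  have h4 : ¬ ((sSup S + 1 : ℕ):ℝ) ≤ rr c x := fun h => h3 ((hmem _).mpr h)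
  push_neg at h4
  push_cast at h4
  exact ⟨by linarith, h2⟩

lemma sqrt_nat_atTop : Tendsto (fun B : ℕ => Real.sqrt B) atTop atTop := by
  rw [tendsto_atTop_atTop]
  intro b
  refine ⟨⌈(max b 0)^2⌉₊, fun B hB => ?_⟩
  have h1 : (max b 0)^2 ≤ (B:ℝ) := by exact_mod_cast (Nat.ceil_le).mp hB
  calc b ≤ max b 0 := le_max_left _ _
    _ = Real.sqrt ((max b 0)^2) := (Real.sqrt_sq (le_max_right _ _)).symm
    _ ≤ _ := Real.sqrt_le_sqrt h1

lemma mul_sqrt_eq (s y : ℝ) (hs : 0 ≤ s) : s * Real.sqrt y = Real.sqrt (s^2 * y) := by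
  rw [Real.sqrt_mul (sq_nonneg s), Real.sqrt_sq hs]

noncomputable def Nf (C : ℝ) (B : ℕ) : ℝ :=
  (⌊C * Real.sqrt B⌋₊ : ℝ) +
    ((sSup {w : ℕ | (w : ℝ) * ((w : ℝ) + 1) / 2 ≤ (B : ℝ) - ⌊C * Real.sqrt B⌋₊} : ℕ) : ℝ)

noncomputable def Df (C : ℝ) (B : ℕ) : ℝ :=
  (⌊C * Real.sqrt B⌋₊ : ℝ) +
    ((sSup {w : ℕ | (⌊C * Real.sqrt B⌋₊ : ℝ) * w + (w : ℝ) * ((w : ℝ) + 1) / 2 ≤ (B : ℝ)} : ℕ) : ℝ)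

set_option maxHeartbeats 2000000 in
lemma part1 (C : ℝ) (hC : 0 < C) :
    Tendsto (fun B : ℕ => Nf C B / Df C B) atTop
      (nhds ((C + Real.sqrt 2) / Real.sqrt (C ^ 2 + 2))) := by
  have hinv : Tendsto (fun B : ℕ => 1 / Real.sqrt B) atTop (nhds 0) := by
    simpa [one_div, Function.comp_def] using tendsto_inv_atTop_zero.comp sqrt_nat_atTop
  -- limits of the four bound functions
  have hl1 : Tendsto (fun B : ℕ => C - 5/2 * (1/Real.sqrt B)
      + Real.sqrt (2 - 2*C*(1/Real.sqrt B))) atTop (nhds (C + Real.sqrt 2)) := by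
    have h3 := ((tendsto_const_nhds (x := C)).sub (hinv.const_mul (5/2))).add
      (((tendsto_const_nhds (x := (2:ℝ))).sub (hinv.const_mul (2*C))).sqrt)
    simpa using h3
  have hu1 : Tendsto (fun B : ℕ => C + Real.sqrt ((1/2 * (1/Real.sqrt B))^2 + 2)) atTop
      (nhds (C + Real.sqrt 2)) := by
    have h3 := (tendsto_const_nhds (x := C)).add
      ((((hinv.const_mul (1/2)).pow 2).add_const 2).sqrt)
    simpa using h3
  have hl2 : Tendsto (fun B : ℕ => -3/2 * (1/Real.sqrt B)
      + Real.sqrt ((C - 1/2*(1/Real.sqrt B))^2 + 2)) atTop (nhds (Real.sqrt (C^2 + 2))) := by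
    have h3 := (hinv.const_mul (-3/2)).add
      ((((tendsto_const_nhds (x := C)).sub (hinv.const_mul (1/2))).pow 2).add_const 2).sqrt
    simpa using h3
  have hu2 : Tendsto (fun B : ℕ => Real.sqrt ((C + 1/2*(1/Real.sqrt B))^2 + 2)) atTop
      (nhds (Real.sqrt (C^2 + 2))) := by
    have h3 := ((((tendsto_const_nhds (x := C)).add (hinv.const_mul (1/2))).pow 2).add_const 2).sqrt
    simpa using h3
  have hE : ∀ᶠ B : ℕ in atTop, 2*C + 2 + 1/C ≤ Real.sqrt B :=
    sqrt_nat_atTop.eventually_ge_atTop _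
  have bounds : ∀ᶠ B : ℕ in atTop,
      ((C - 5/2 * (1/Real.sqrt B) + Real.sqrt (2 - 2*C*(1/Real.sqrt B)) ≤ Nf C B / Real.sqrt B ∧
        Nf C B / Real.sqrt B ≤ C + Real.sqrt ((1/2 * (1/Real.sqrt B))^2 + 2)) ∧
       (-3/2 * (1/Real.sqrt B) + Real.sqrt ((C - 1/2*(1/Real.sqrt B))^2 + 2) ≤ Df C B / Real.sqrt B ∧
        Df C B / Real.sqrt B ≤ Real.sqrt ((C + 1/2*(1/Real.sqrt B))^2 + 2))) := by
    filter_upwards [hE] with B hB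
    unfold Nf Df
    set s := Real.sqrt (B:ℝ) with hsdef
    have hC1 : 0 < 1/C := by positivity
    have hs1 : 2 ≤ s := by linarith [mul_pos hC hC, hC.le]
    have hs0 : 0 < s := by linarith
    set a := ((⌊C * s⌋₊ : ℕ) : ℝ) with hadef
    have ha0 : (0:ℝ) ≤ a := Nat.cast_nonneg _
    have ha1 : a ≤ C * s := Nat.floor_le (by positivity)
    have ha2 : C * s < a + 1 := Nat.lt_floor_add_one _
    have hB2 : s^2 = (B:ℝ) := Real.sq_sqrt (Nat.cast_nonneg B)
    have hCs : 1 ≤ C * s := by nlinarith [mul_one_div_cancel hC.ne']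
    have hCle : C ≤ s := by nlinarith
    have hx : 0 ≤ (B:ℝ) - a := by nlinarith
    have e1 : s * (1/s) = 1 := by field_simp
    have hp' := sSup_quad 0 ((B:ℝ) - a) le_rfl hx
    have hh' := sSup_quad a (B:ℝ) ha0 (Nat.cast_nonneg B)
    unfold rr at hp' hh'
    have hset : {w : ℕ | (w:ℝ) * ((w:ℝ) + 1) / 2 ≤ (B:ℝ) - a}
        = {w : ℕ | (0:ℝ) * (w:ℝ) + (w:ℝ) * ((w:ℝ) + 1) / 2 ≤ (B:ℝ) - a} := by
      ext w; simp
    rw [hset]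
    set P := ((sSup {w : ℕ | (0:ℝ) * (w:ℝ) + (w:ℝ) * ((w:ℝ) + 1) / 2 ≤ (B:ℝ) - a} : ℕ) : ℝ) with hPdef
    set H := ((sSup {w : ℕ | a * (w:ℝ) + (w:ℝ) * ((w:ℝ) + 1) / 2 ≤ (B:ℝ)} : ℕ) : ℝ) with hHdef
    have k1 : s * Real.sqrt (2 - 2*C*(1/s)) = Real.sqrt (2*(B:ℝ) - 2*(C*s)) := by
      rw [mul_sqrt_eq s _ hs0.le]
      congr 1
      linear_combination 2*hB2 - 2*C*s*e1
    have k2 : s * Real.sqrt ((1/2 * (1/s))^2 + 2) = Real.sqrt (1/4 + 2*(B:ℝ)) := by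
      rw [mul_sqrt_eq s _ hs0.le]
      congr 1
      linear_combination (1/4)*(s*(1/s)+1)*e1 + 2*hB2
    have k3 : s * Real.sqrt ((C - 1/2*(1/s))^2 + 2) = Real.sqrt ((C*s - 1/2)^2 + 2*(B:ℝ)) := by
      rw [mul_sqrt_eq s _ hs0.le]
      congr 1
      linear_combination (-C*s + (1/4)*(s*(1/s)+1))*e1 + 2*hB2
    have k4 : s * Real.sqrt ((C + 1/2*(1/s))^2 + 2) = Real.sqrt ((C*s + 1/2)^2 + 2*(B:ℝ)) := by
      rw [mul_sqrt_eq s _ hs0.le]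
      congr 1
      linear_combination (C*s + (1/4)*(s*(1/s)+1))*e1 + 2*hB2
    have m1 : Real.sqrt (2*(B:ℝ) - 2*(C*s)) ≤ Real.sqrt ((0 + 1/2)^2 + 2*((B:ℝ) - a)) :=
      Real.sqrt_le_sqrt (by nlinarith [ha1])
    have m2 : Real.sqrt ((0 + 1/2)^2 + 2*((B:ℝ) - a)) ≤ Real.sqrt (1/4 + 2*(B:ℝ)) :=
      Real.sqrt_le_sqrt (by nlinarith [ha0])
    have hint3 : (0:ℝ) ≤ (a + 1 - C*s) * (a + C*s) :=
      mul_nonneg (by linarith) (by linarith)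
    have hint4 : (0:ℝ) ≤ (C*s - a) * (C*s + a + 1) :=
      mul_nonneg (by linarith) (by linarith)
    have m3 : Real.sqrt ((C*s - 1/2)^2 + 2*(B:ℝ)) ≤ Real.sqrt ((a + 1/2)^2 + 2*(B:ℝ)) :=
      Real.sqrt_le_sqrt (by nlinarith [hint3])
    have m4 : Real.sqrt ((a + 1/2)^2 + 2*(B:ℝ)) ≤ Real.sqrt ((C*s + 1/2)^2 + 2*(B:ℝ)) :=
      Real.sqrt_le_sqrt (by nlinarith [hint4])
    refine ⟨⟨?_, ?_⟩, ?_, ?_⟩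
    · rw [le_div_iff₀ hs0]
      calc (C - 5/2 * (1/s) + Real.sqrt (2 - 2*C*(1/s))) * s
          = C*s - 5/2 + s * Real.sqrt (2 - 2*C*(1/s)) := by field_simp
        _ = C*s - 5/2 + Real.sqrt (2*(B:ℝ) - 2*(C*s)) := by rw [k1]
        _ ≤ a + P := by linarith [hp'.1, m1]
    · rw [div_le_iff₀ hs0]
      calc a + P ≤ C*s + Real.sqrt (1/4 + 2*(B:ℝ)) := by linarith [hp'.2, m2]
        _ = (C + Real.sqrt ((1/2 * (1/s))^2 + 2)) * s := by
            rw [add_mul, mul_comm (Real.sqrt _) s, k2]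
    · rw [le_div_iff₀ hs0]
      calc (-3/2 * (1/s) + Real.sqrt ((C - 1/2*(1/s))^2 + 2)) * s
          = -3/2 + s * Real.sqrt ((C - 1/2*(1/s))^2 + 2) := by field_simp
        _ = -3/2 + Real.sqrt ((C*s - 1/2)^2 + 2*(B:ℝ)) := by rw [k3]
        _ ≤ a + H := by linarith [hh'.1, m3]
    · rw [div_le_iff₀ hs0]
      calc a + H ≤ Real.sqrt ((C*s + 1/2)^2 + 2*(B:ℝ)) := by
            have := Real.sqrt_nonneg ((C*s + 1/2)^2 + 2*(B:ℝ))
            linarith [hh'.2, m4]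
        _ = Real.sqrt ((C + 1/2*(1/s))^2 + 2) * s := by
            rw [mul_comm (Real.sqrt ((C + 1/2*(1/s))^2 + 2)) s, k4]
  have hN : Tendsto (fun B : ℕ => Nf C B / Real.sqrt B) atTop (nhds (C + Real.sqrt 2)) :=
    tendsto_of_tendsto_of_tendsto_of_le_of_le' hl1 hu1
      (bounds.mono fun B h => h.1.1) (bounds.mono fun B h => h.1.2)
  have hD : Tendsto (fun B : ℕ => Df C B / Real.sqrt B) atTop (nhds (Real.sqrt (C^2 + 2))) :=
    tendsto_of_tendsto_of_tendsto_of_le_of_le' hl2 hu2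
      (bounds.mono fun B h => h.2.1) (bounds.mono fun B h => h.2.2)
  have hpos : 0 < Real.sqrt (C^2 + 2) := Real.sqrt_pos.mpr (by positivity)
  have hdiv := hN.div hD hpos.ne'
  refine Tendsto.congr' ?_ hdiv
  filter_upwards [hE] with B hB
  have hs0 : Real.sqrt B ≠ 0 := by
    have hC1 : 0 < 1/C := by positivity
    have : (0:ℝ) < Real.sqrt B := by linarith [mul_pos hC hC, hC.le]
    exact this.ne'
  simp only [Pi.div_apply]
  rw [div_div_eq_mul_div, div_mul_cancel₀ _ hs0]

theorem stmt_12 :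
    (∀ C : ℝ, 0 < C →
      Filter.Tendsto (fun B : ℕ =>
        ((⌊C * Real.sqrt B⌋₊ : ℝ) +
          ((sSup {w : ℕ | (w : ℝ) * ((w : ℝ) + 1) / 2 ≤ (B : ℝ) - ⌊C * Real.sqrt B⌋₊} : ℕ) : ℝ)) /
        ((⌊C * Real.sqrt B⌋₊ : ℝ) +
          ((sSup {w : ℕ | (⌊C * Real.sqrt B⌋₊ : ℝ) * w + (w : ℝ) * ((w : ℝ) + 1) / 2 ≤ (B : ℝ)} : ℕ) : ℝ)))
        Filter.atTop (nhds ((C + Real.sqrt 2) / Real.sqrt (C ^ 2 + 2)))) ∧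
    IsLUB ((fun C : ℝ => (C + Real.sqrt 2) / Real.sqrt (C ^ 2 + 2)) '' {C | 0 < C})
      (Real.sqrt 2) := by
  constructor
  · intro C hC
    exact part1 C hC
  · constructor
    · rintro y ⟨C, hC, rfl⟩
      simp only [Set.mem_setOf_eq] at hC
      have h2 : 0 < Real.sqrt (C^2 + 2) := Real.sqrt_pos.mpr (by positivity)
      rw [div_le_iff₀ h2]
      have hm : Real.sqrt 2 * Real.sqrt (C^2 + 2) = Real.sqrt (2 * (C^2 + 2)) :=
        (Real.sqrt_mul (by norm_num) _).symm
      rw [hm]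
      have h3 : C + Real.sqrt 2 = Real.sqrt ((C + Real.sqrt 2)^2) :=
        (Real.sqrt_sq (by positivity)).symm
      rw [h3]
      apply Real.sqrt_le_sqrt
      nlinarith [Real.sq_sqrt (show (0:ℝ) ≤ 2 by norm_num), sq_nonneg (C - Real.sqrt 2)]
    · intro b hb
      apply hb
      refine ⟨Real.sqrt 2, by simpa using Real.sqrt_pos.mpr (by norm_num : (0:ℝ) < 2), ?_⟩
      show (Real.sqrt 2 + Real.sqrt 2) / Real.sqrt (Real.sqrt 2 ^ 2 + 2) = Real.sqrt 2
      have h4 : Real.sqrt 2 ^ 2 = 2 := Real.sq_sqrt (by norm_num)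
      rw [h4]
      have h5 : Real.sqrt (2 + 2) = 2 := by
        rw [show (2+2:ℝ) = 2^2 by norm_num, Real.sqrt_sq (by norm_num : (0:ℝ) ≤ 2)]
      rw [h5]
      ring
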